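/- Let 𝓜 be a completely positive trace-preserving linear map on d×d complex matrices and let λ' be the minimum eigenvalue of its Choi matrix. If F is real with F ≥ 1 and F·λ' + (1−F)/d ≥ 0 (equivalently 1 ≤ F ≤ (1 − dλ')⁻¹ when dλ' < 1, and any F ≥ 1 when dλ' ≥ 1), then the map D_F∘𝓜∘D_{1/F} is completely positive and trace-preserving. -/

import Mathlib

open Matrix
open scoped ComplexOrder

noncomputable section

/-- d×d complex matrices. -/
abbrev Mat (d : ℕ) := Matrix (Fin d) (Fin d) ℂ

/-- The depolarising map `D_F(A) = F·A + (1−F)·(Tr(A)/d)·I`. -/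
def DFmap (d : ℕ) (F : ℂ) : Mat d →ₗ[ℂ] Mat d :=
  F • LinearMap.id +
    ((1 - F) / d) • ((Matrix.traceLinearMap (Fin d) ℂ ℂ).smulRight (1 : Mat d))

/-- The Choi matrix `Σ_{a,b} |a⟩⟨b| ⊗ 𝓜(|a⟩⟨b|)` of a linear map on matrices. -/
def choi {d : ℕ} (M : Mat d →ₗ[ℂ] Mat d) : Matrix (Fin d × Fin d) (Fin d × Fin d) ℂ :=
  ∑ a : Fin d, ∑ b : Fin d,
    kroneckerMap (· * ·) (single a b (1 : ℂ)) (M (single a b (1 : ℂ)))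

lemma choi_apply {d : ℕ} (M : Mat d →ₗ[ℂ] Mat d) (p q : Fin d × Fin d) :
    choi M p q = M (single p.1 q.1 1) p.2 q.2 := by
  obtain ⟨a, i⟩ := p; obtain ⟨b, j⟩ := q
  simp [choi, Matrix.sum_apply, kroneckerMap_apply, single, Matrix.of_apply, ite_and]

lemma psd_smul_real {n : Type*} [Fintype n] {A : Matrix n n ℂ} (hA : A.PosSemidef)
    {c : ℝ} (hc : 0 ≤ c) : ((c : ℂ) • A).PosSemidef := by
  refine Matrix.PosSemidef.of_dotProduct_mulVec_nonneg ?_ (fun x => ?_)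
  · unfold Matrix.IsHermitian
    rw [conjTranspose_smul, hA.1]
    congr 1
    simp
  · rw [smul_mulVec, dotProduct_smul, smul_eq_mul]
    have h := hA.dotProduct_mulVec_nonneg x
    rw [Complex.nonneg_iff] at h ⊢
    refine ⟨?_, ?_⟩
    · simp only [Complex.mul_re, Complex.ofReal_re, Complex.ofReal_im, zero_mul, sub_zero]
      exact mul_nonneg hc h.1
    · simp [Complex.mul_im, ← h.2]

lemma sub_least_psd {n : Type*} [Fintype n] [DecidableEq n] {C : Matrix n n ℂ}
    (hC : C.IsHermitian) (lam : ℝ) (h : ∀ i, lam ≤ hC.eigenvalues i) :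
    (C - (lam : ℂ) • 1).PosSemidef := by
  have hU : (hC.eigenvectorUnitary : Matrix n n ℂ) *
      (star (hC.eigenvectorUnitary : Matrix n n ℂ)) = 1 :=
    (Matrix.mem_unitaryGroup_iff).mp hC.eigenvectorUnitary.2
  have h1 : (diagonal fun i => ((hC.eigenvalues i - lam : ℝ) : ℂ)) =
      diagonal (RCLike.ofReal ∘ hC.eigenvalues) - (lam : ℂ) • 1 := by
    rw [Matrix.smul_one_eq_diagonal, diagonal_sub]
    congr 1; ext i; simp [Function.comp]
  have key : C - (lam : ℂ) • 1 =
      (hC.eigenvectorUnitary : Matrix n n ℂ) *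
        (diagonal fun i => ((hC.eigenvalues i - lam : ℝ) : ℂ)) *
        (star (hC.eigenvectorUnitary : Matrix n n ℂ)) := by
    have hs := hC.spectral_theorem
    rw [Unitary.conjStarAlgAut_apply] at hs
    rw [h1, Matrix.mul_sub, Matrix.sub_mul, ← hs]
    congr 1
    rw [Matrix.mul_smul, mul_one, Matrix.smul_mul, hU]
  rw [key]
  have hdiag : (diagonal fun i => ((hC.eigenvalues i - lam : ℝ) : ℂ)).PosSemidef := by
    apply Matrix.PosSemidef.diagonal
    intro i
    show (0 : ℂ) ≤ _
    rw [Complex.zero_le_real]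
    linarith [h i]
  exact hdiag.mul_mul_conjTranspose_same _

lemma one_kron_psd {d : ℕ} {B : Matrix (Fin d) (Fin d) ℂ} (hB : B.PosSemidef) :
    (kroneckerMap (· * ·) (1 : Matrix (Fin d) (Fin d) ℂ) B).PosSemidef := by
  refine Matrix.PosSemidef.of_dotProduct_mulVec_nonneg ?_ (fun x => ?_)
  · ext ⟨a, i⟩ ⟨b, j⟩
    simp only [conjTranspose_apply, kroneckerMap_apply, one_apply, star_mul', apply_ite star,
      star_one, star_zero, ← conjTranspose_apply, hB.1]
    by_cases h : a = b <;> simp [h, eq_comm, (hB.1.apply i j).symm]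
  · have key : star x ⬝ᵥ (kroneckerMap (· * ·) (1 : Matrix (Fin d) (Fin d) ℂ) B) *ᵥ x =
        ∑ a : Fin d, star (fun i => x (a, i)) ⬝ᵥ B *ᵥ (fun i => x (a, i)) := by
      simp only [dotProduct, mulVec, Fintype.sum_prod_type, kroneckerMap_apply, one_apply,
        Pi.star_apply, ite_mul, one_mul, zero_mul, Finset.sum_ite_eq, Finset.mem_univ, if_true]
      congr 1; ext a; congr 1; ext i; congr 1
      rw [Finset.sum_comm]
      simp
    rw [key]
    exact Finset.sum_nonneg fun a _ => hB.dotProduct_mulVec_nonneg _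

lemma sum_stdBasis_diag (d : ℕ) :
    (∑ a : Fin d, single a a (1 : ℂ)) = 1 := by
  ext i j
  simp [Matrix.sum_apply, single, one_apply, ite_and, eq_comm]

lemma quad_expand {d : ℕ} (Cm : Matrix (Fin d × Fin d) (Fin d × Fin d) ℂ) (v : Fin d → ℂ)
    (a : Fin d) :
    star (fun p : Fin d × Fin d => if p.1 = a then v p.2 else 0) ⬝ᵥ
      (Cm *ᵥ fun p : Fin d × Fin d => if p.1 = a then v p.2 else 0) =
    ∑ i, ∑ j, star (v i) * (Cm (a, i) (a, j) * v j) := by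
  simp only [dotProduct, mulVec, Fintype.sum_prod_type, Pi.star_apply, apply_ite, star_zero,
    ite_mul, zero_mul, mul_ite, mul_zero]
  rw [Finset.sum_comm]
  simp only [Finset.sum_ite_eq', Finset.mem_univ, if_true]
  refine Finset.sum_congr rfl fun i _ => ?_
  rw [Finset.sum_comm]
  simp only [Finset.sum_ite_eq', Finset.mem_univ, if_true]
  rw [Finset.mul_sum]

lemma quad_norm {d : ℕ} (v : Fin d → ℂ) (a : Fin d) :
    star (fun p : Fin d × Fin d => if p.1 = a then v p.2 else 0) ⬝ᵥ
      (fun p : Fin d × Fin d => if p.1 = a then v p.2 else 0) = star v ⬝ᵥ v := by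
  simp only [dotProduct, Fintype.sum_prod_type, Pi.star_apply, apply_ite, star_zero,
    ite_mul, zero_mul, mul_ite, mul_zero]
  rw [Finset.sum_comm]
  simp [Finset.sum_ite_eq']

/-- for a completely positive trace-preserving map `𝓜` whose Choi matrix
has minimum eigenvalue `λ'`, and a real `F ≥ 1` with `F·λ' + (1−F)/d ≥ 0`, the map
`D_F∘𝓜∘D_{1/F}` is completely positive and trace-preserving. -/
theorem depolarised_conjugated_map_physical {d : ℕ} (hd : 1 ≤ d)
    (M : Mat d →ₗ[ℂ] Mat d)
    (hCP : (choi M).PosSemidef) (hTP : ∀ A, (M A).trace = A.trace)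
    (lam : ℝ) (hlam : IsLeast (Set.range hCP.1.eigenvalues) lam)
    (F : ℝ) (hF1 : 1 ≤ F) (hF2 : 0 ≤ F * lam + (1 - F) / d) :
    (choi (DFmap d (F : ℂ) ∘ₗ M ∘ₗ DFmap d ((F : ℂ)⁻¹))).PosSemidef ∧
    (∀ A, ((DFmap d (F : ℂ) ∘ₗ M ∘ₗ DFmap d ((F : ℂ)⁻¹)) A).trace = A.trace) := by
  have hd0 : (d : ℂ) ≠ 0 := by
    exact_mod_cast Nat.cast_ne_zero.mpr (by omega)
  have hF0 : (F : ℂ) ≠ 0 := by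
    exact_mod_cast Complex.ofReal_ne_zero.mpr (by positivity)
  -- trace of DFmap
  have htrD : ∀ (c : ℂ) (B : Mat d), (DFmap d c B).trace = B.trace := by
    intro c B
    simp only [DFmap, LinearMap.add_apply, LinearMap.smul_apply, LinearMap.id_apply,
      LinearMap.smulRight_apply, traceLinearMap_apply, trace_add, trace_smul, trace_one,
      smul_eq_mul, Fintype.card_fin]
    field_simp
    ring
  have hTPn : ∀ A : Mat d,
      ((DFmap d (F : ℂ) ∘ₗ M ∘ₗ DFmap d ((F : ℂ)⁻¹)) A).trace = A.trace := by
    intro A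
    simp only [LinearMap.comp_apply, htrD, hTP]
  refine ⟨?_, hTPn⟩
  -- structural formula for the composed map
  have hNA : ∀ A : Mat d, (DFmap d (F : ℂ) ∘ₗ M ∘ₗ DFmap d ((F : ℂ)⁻¹)) A =
      M A + (((F : ℂ) - 1) / d) • (A.trace • (M 1 - 1)) := by
    intro A
    simp only [LinearMap.comp_apply, DFmap, LinearMap.add_apply, LinearMap.smul_apply,
      LinearMap.id_apply, LinearMap.smulRight_apply, traceLinearMap_apply, map_add, _root_.map_smul,
      trace_add, trace_smul, hTP, trace_one, Fintype.card_fin, smul_eq_mul, smul_sub]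
    match_scalars <;> (field_simp; try ring)
  -- quadratic form bound for choi M
  have hClam : (choi M - (lam : ℂ) • 1).PosSemidef :=
    sub_least_psd hCP.1 lam (fun i => hlam.2 ⟨i, rfl⟩)
  have hquadC : ∀ x : Fin d × Fin d → ℂ,
      (lam : ℂ) * (star x ⬝ᵥ x) ≤ star x ⬝ᵥ (choi M *ᵥ x) := by
    intro x
    have h := hClam.dotProduct_mulVec_nonneg x
    rw [sub_mulVec, dotProduct_sub, smul_mulVec, one_mulVec, dotProduct_smul,
      smul_eq_mul] at h
    exact sub_nonneg.mp h
  have hM1 : M 1 = ∑ a : Fin d, M (single a a (1 : ℂ)) := by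
    rw [← map_sum, sum_stdBasis_diag]
  have hMherm : (M 1).IsHermitian := by
    show _ = _
    ext i j
    rw [conjTranspose_apply, hM1]
    simp only [Matrix.sum_apply, star_sum]
    refine Finset.sum_congr rfl fun a _ => ?_
    have h1 : M (single a a (1 : ℂ)) j i = choi M (a, j) (a, i) :=
      (choi_apply M (a, j) (a, i)).symm
    have h2 : M (single a a (1 : ℂ)) i j = choi M (a, i) (a, j) :=
      (choi_apply M (a, i) (a, j)).symm
    rw [h1, h2, hCP.1.apply]
  -- quadratic form bound for M 1
  have hquadM1 : ∀ v : Fin d → ℂ,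
      (((d : ℝ) * lam : ℝ) : ℂ) * (star v ⬝ᵥ v) ≤ star v ⬝ᵥ (M 1 *ᵥ v) := by
    intro v
    have h3 : star v ⬝ᵥ (M 1 *ᵥ v) =
        ∑ a : Fin d, star (fun p : Fin d × Fin d => if p.1 = a then v p.2 else 0) ⬝ᵥ
          (choi M *ᵥ fun p : Fin d × Fin d => if p.1 = a then v p.2 else 0) := by
      simp only [quad_expand, choi_apply]
      conv_rhs => rw [Finset.sum_comm]
      simp only [dotProduct, mulVec, Pi.star_apply]
      refine Finset.sum_congr rfl fun i _ => ?_
      conv_rhs => rw [Finset.sum_comm]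
      rw [Finset.mul_sum]
      refine Finset.sum_congr rfl fun j _ => ?_
      rw [hM1, Matrix.sum_apply, Finset.sum_mul, Finset.mul_sum]
    rw [h3]
    calc (((d : ℝ) * lam : ℝ) : ℂ) * (star v ⬝ᵥ v)
        = ∑ _a : Fin d, (lam : ℂ) * (star v ⬝ᵥ v) := by
          push_cast
          rw [Finset.sum_const, Finset.card_univ, Fintype.card_fin, nsmul_eq_mul]
          ring
      _ ≤ _ := by
          refine Finset.sum_le_sum fun a _ => ?_
          have h := hquadC (fun p : Fin d × Fin d => if p.1 = a then v p.2 else 0)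
          rwa [quad_norm] at h
  have hM1psd : (M 1 - (((d : ℝ) * lam : ℝ) : ℂ) • 1).PosSemidef := by
    refine Matrix.PosSemidef.of_dotProduct_mulVec_nonneg ?_ (fun v => ?_)
    · have hsm : ((((d : ℝ) * lam : ℝ) : ℂ) • (1 : Mat d)).IsHermitian := by
        show _ = _
        rw [conjTranspose_smul, conjTranspose_one]
        congr 1
        simp
      exact hMherm.sub hsm
    · rw [sub_mulVec, dotProduct_sub, smul_mulVec, one_mulVec, dotProduct_smul,
        smul_eq_mul]
      exact sub_nonneg.mpr (hquadM1 v)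
  -- final decomposition
  have hc1 : (0 : ℝ) ≤ (F - 1) / d := div_nonneg (by linarith) (by positivity)
  have hkey : choi (DFmap d (F : ℂ) ∘ₗ M ∘ₗ DFmap d ((F : ℂ)⁻¹)) =
      (choi M - (lam : ℂ) • 1) +
        ((((F - 1) / d : ℝ)) : ℂ) •
          (kroneckerMap (· * ·) (1 : Mat d) (M 1 - (((d : ℝ) * lam : ℝ) : ℂ) • 1)) +
        (((F * lam + (1 - F) / d : ℝ)) : ℂ) • 1 := by
    ext p q
    obtain ⟨a, i⟩ := p; obtain ⟨b, j⟩ := q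
    rw [choi_apply, hNA]
    have hC : choi M (a, i) (b, j) = M (single a b 1) i j := choi_apply M (a, i) (b, j)
    by_cases hab : a = b
    · subst hab
      simp only [Matrix.add_apply, Matrix.sub_apply, Matrix.smul_apply, kroneckerMap_apply,
        Matrix.one_apply, trace_single_eq_same, smul_eq_mul, hC, Prod.mk.injEq, if_true,
        eq_self_iff_true, true_and]
      by_cases hij : i = j <;> simp only [hij, if_true, if_false, eq_self_iff_true] <;>
        push_cast <;> field_simp <;> ring
    · have htr0 : (single a b (1 : ℂ)).trace = 0 :=
        trace_single_eq_of_ne a b 1 hab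
      simp only [Matrix.add_apply, Matrix.sub_apply, Matrix.smul_apply, kroneckerMap_apply,
        Matrix.one_apply, htr0, smul_eq_mul, hC, Prod.mk.injEq, hab, if_false, false_and]
      simp [hab]
  rw [hkey]
  exact ((hClam.add (psd_smul_real (one_kron_psd hM1psd) hc1)).add
    (psd_smul_real Matrix.PosSemidef.one hF2))
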